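/- arXiv:1804.07203 — 3 statements merged into one kernel-verified Lean document; each statement's English description precedes it below -/
import Mathlib

section
/- Let 𝒫 be a family of distributions for a real random variable ζ with i.i.d. copies ζ_1, ζ_2, …, and set S_n = n^{-1} ∑_{i=1}^n ζ_i. Suppose for all P ∈ 𝒫 that 𝔼_P[ζ] = 0 and 𝔼_P[|ζ|^{1+η}] < c for some fixed η, c > 0. Then for all ε > 0, lim_{n→∞} sup_{P∈𝒫} P(|S_n| > ε) = 0. -/
open MeasureTheory ProbabilityTheory Filter

noncomputable def trunc (M : ℝ) (x : ℝ) : ℝ := if |x| ≤ M then x else 0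

lemma trunc_meas (M : ℝ) : Measurable (trunc M) :=
  Measurable.ite (measurableSet_le measurable_abs measurable_const) measurable_id
    measurable_const

lemma abs_trunc_le (M : ℝ) (hM : 0 ≤ M) (x : ℝ) : |trunc M x| ≤ M := by
  unfold trunc; split <;> simpa

lemma abs_trunc_le_abs (M : ℝ) (x : ℝ) : |trunc M x| ≤ |x| := by
  unfold trunc; split <;> simp [abs_nonneg]

lemma trunc_eq (M : ℝ) {x : ℝ} (h : |x| ≤ M) : trunc M x = x := if_pos h

lemma abs_trunc_sub (M : ℝ) (hM : 0 < M) (η : ℝ) (hη : 0 < η) (x : ℝ) :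
    |trunc M x - x| ≤ |x| ^ (1 + η) / M ^ η := by
  unfold trunc; split
  case isTrue h =>
    simp only [sub_self, abs_zero]
    positivity
  case isFalse h =>
    push_neg at h
    have hx : 0 < |x| := lt_trans hM h
    rw [zero_sub, abs_neg, le_div_iff₀ (Real.rpow_pos_of_pos hM η)]
    calc |x| * M ^ η ≤ |x| * |x| ^ η :=
          mul_le_mul_of_nonneg_left (Real.rpow_le_rpow hM.le h.le hη.le) (abs_nonneg x)
      _ = |x| ^ (1 + η) := by
          rw [Real.rpow_add hx, Real.rpow_one]

lemma sq_trunc_le (M : ℝ) (hM : 0 < M) (η : ℝ) (hη : 0 < η) (hη1 : η ≤ 1) (x : ℝ) :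
    trunc M x ^ 2 ≤ M ^ (1 - η) * |x| ^ (1 + η) := by
  rcases eq_or_lt_of_le (abs_nonneg (trunc M x)) with h0 | h0
  · have : trunc M x = 0 := abs_eq_zero.mp h0.symm
    rw [this, zero_pow two_ne_zero]
    positivity
  · have h2 : trunc M x ^ 2 = |trunc M x| ^ ((1 - η) + (1 + η)) := by
      rw [show (1 - η) + (1 + η) = (2:ℝ) by ring, show (2:ℝ) = ((2:ℕ):ℝ) by norm_num,
        Real.rpow_natCast, sq_abs]
    rw [h2, Real.rpow_add h0]
    exact mul_le_mul
      (Real.rpow_le_rpow (abs_nonneg _) (abs_trunc_le M hM.le x) (by linarith))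
      (Real.rpow_le_rpow (abs_nonneg _) (abs_trunc_le_abs M x) (by linarith))
      (Real.rpow_nonneg (abs_nonneg _) _) (Real.rpow_nonneg hM.le _)


lemma abs_rpow_le_one_add (η₁ η₂ : ℝ) (h0 : 0 ≤ η₁) (h : η₁ ≤ η₂) (x : ℝ) :
    |x| ^ η₁ ≤ 1 + |x| ^ η₂ := by
  rcases le_total |x| 1 with hx | hx
  · have : |x| ^ η₁ ≤ 1 := Real.rpow_le_one (abs_nonneg x) hx h0
    have h2 : 0 ≤ |x| ^ η₂ := Real.rpow_nonneg (abs_nonneg x) _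
    linarith
  · have : |x| ^ η₁ ≤ |x| ^ η₂ := Real.rpow_le_rpow_of_exponent_le hx h
    linarith

lemma integrable_self_of_abs_rpow {Ω : Type*} [MeasurableSpace Ω] {μ : Measure Ω}
    [IsProbabilityMeasure μ] {f : Ω → ℝ} (hf : Measurable f) {η : ℝ} (hη : 0 < η)
    (hint : Integrable (fun ω => |f ω| ^ (1 + η)) μ) : Integrable f μ := by
  refine Integrable.mono (hint.add (integrable_const 1)) hf.aestronglyMeasurable ?_
  filter_upwards with ω
  have h1 : 0 ≤ |f ω| ^ (1 + η) := Real.rpow_nonneg (abs_nonneg _) _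
  have h2 : |f ω| ^ (1:ℝ) ≤ 1 + |f ω| ^ (1 + η) :=
    abs_rpow_le_one_add 1 (1 + η) one_pos.le (by linarith) (f ω)
  rw [Real.rpow_one] at h2
  simp only [Pi.add_apply, Real.norm_eq_abs]
  rw [abs_of_nonneg (by linarith : (0:ℝ) ≤ |f ω| ^ (1+η) + 1)]
  linarith

lemma key_bound {Ω : Type*} [MeasurableSpace Ω] (μ : Measure Ω) [IsProbabilityMeasure μ]
    (X : ℕ → Ω → ℝ) (hmeas : ∀ j, Measurable (X j))
    (hindep : iIndepFun X μ)
    (hident : ∀ j, IdentDistrib (X j) (X 0) μ μ)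
    (η c : ℝ) (hη : 0 < η) (hη1 : η ≤ 1) (hc : 0 < c)
    (hmom : ∫ ω, |X 0 ω| ^ (1 + η) ∂μ ≤ c)
    (hmomInt : Integrable (fun ω => |X 0 ω| ^ (1 + η)) μ)
    (hmean : ∫ ω, X 0 ω ∂μ = 0)
    (ε : ℝ) (hε : 0 < ε) (n : ℕ) (hn : 0 < n) (M : ℝ) (hM : 0 < M)
    (hMε : c / M ^ η ≤ ε / 2) :
    (μ {ω | ε < |(n : ℝ)⁻¹ * ∑ j ∈ Finset.range n, X j ω|}).toReal
      ≤ n * (c / M ^ (1 + η)) + 4 * c * M ^ (1 - η) / (n * ε ^ 2) := by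
  set Y : ℕ → Ω → ℝ := fun j ω => trunc M (X j ω) with hY
  have hYmeas : ∀ j, Measurable (Y j) := fun j => (trunc_meas M).comp (hmeas j)
  have hYident : ∀ j, IdentDistrib (Y j) (Y 0) μ μ := fun j =>
    (hident j).comp (trunc_meas M)
  have hYindep : iIndepFun Y μ :=
    hindep.comp (fun _ => trunc M) (fun _ => trunc_meas M)
  have hYmem : ∀ j, MemLp (Y j) 2 μ := by
    intro j
    exact (memLp_top_of_bound (hYmeas j).aestronglyMeasurable M
      (Filter.Eventually.of_forall fun ω => by
        simpa [Real.norm_eq_abs] using abs_trunc_le M hM.le (X j ω))).mono_exponent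
      le_top
  have hYint : ∀ j, Integrable (Y j) μ := fun j => (hYmem j).integrable one_le_two
  set T : Ω → ℝ := fun ω => (n : ℝ)⁻¹ * ∑ j ∈ Finset.range n, Y j ω with hT
  -- expectation of Y 0
  set m : ℝ := ∫ ω, Y 0 ω ∂μ with hm
  have hXint : Integrable (X 0) μ := integrable_self_of_abs_rpow (hmeas 0) hη hmomInt
  have hmbound : |m| ≤ ε / 2 := by
    have h1 : m = ∫ ω, (Y 0 ω - X 0 ω) ∂μ := by
      rw [integral_sub (hYint 0) hXint, hmean, sub_zero]
    have h2 : |∫ ω, (Y 0 ω - X 0 ω) ∂μ| ≤ ∫ ω, |Y 0 ω - X 0 ω| ∂μ := by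
      simpa [Real.norm_eq_abs] using
        norm_integral_le_integral_norm (μ := μ) (fun ω => Y 0 ω - X 0 ω)
    have h3 : ∫ ω, |Y 0 ω - X 0 ω| ∂μ ≤ ∫ ω, |X 0 ω| ^ (1 + η) / M ^ η ∂μ := by
      refine integral_mono ((hYint 0).sub hXint).abs (hmomInt.div_const _) ?_
      intro ω
      exact abs_trunc_sub M hM η hη (X 0 ω)
    have h4 : ∫ ω, |X 0 ω| ^ (1 + η) / M ^ η ∂μ = (∫ ω, |X 0 ω| ^ (1 + η) ∂μ) / M ^ η :=
      integral_div _ _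
    have h5 : (∫ ω, |X 0 ω| ^ (1 + η) ∂μ) / M ^ η ≤ c / M ^ η := by
      gcongr
    rw [h1]
    calc |∫ ω, (Y 0 ω - X 0 ω) ∂μ| ≤ c / M ^ η := by linarith
      _ ≤ ε / 2 := hMε
  have hTmean : ∫ ω, T ω ∂μ = m := by
    have hne : (n:ℝ) ≠ 0 := Nat.cast_ne_zero.2 hn.ne'
    calc ∫ ω, T ω ∂μ = (n:ℝ)⁻¹ * ∫ ω, ∑ j ∈ Finset.range n, Y j ω ∂μ := integral_const_mul _ _
      _ = (n:ℝ)⁻¹ * ∑ j ∈ Finset.range n, ∫ ω, Y j ω ∂μ := by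
          rw [integral_finset_sum _ (fun j _ => hYint j)]
      _ = (n:ℝ)⁻¹ * ∑ j ∈ Finset.range n, m := by
          congr 1
          exact Finset.sum_congr rfl fun j _ => (hYident j).integral_eq
      _ = m := by
          rw [Finset.sum_const, Finset.card_range, nsmul_eq_mul, ← mul_assoc,
            inv_mul_cancel₀ hne, one_mul]
  -- variance bound
  have hsumfun : (fun ω => ∑ j ∈ Finset.range n, Y j ω) = ∑ j ∈ Finset.range n, Y j := by
    funext ω; simp
  have hvarY0 : variance (Y 0) μ ≤ M ^ (1 - η) * c := by
    have h1 : variance (Y 0) μ ≤ μ[Y 0 ^ 2] :=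
      variance_le_expectation_sq (hYmeas 0).aestronglyMeasurable
    have h2 : μ[Y 0 ^ 2] = ∫ ω, Y 0 ω ^ 2 ∂μ := by simp [Pi.pow_apply]
    have h3 : ∫ ω, Y 0 ω ^ 2 ∂μ ≤ ∫ ω, M ^ (1 - η) * |X 0 ω| ^ (1 + η) ∂μ := by
      refine integral_mono (hYmem 0).integrable_sq (hmomInt.const_mul _) ?_
      intro ω
      exact sq_trunc_le M hM η hη hη1 (X 0 ω)
    have h4 : ∫ ω, M ^ (1 - η) * |X 0 ω| ^ (1 + η) ∂μ
        = M ^ (1 - η) * ∫ ω, |X 0 ω| ^ (1 + η) ∂μ := integral_const_mul _ _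
    have h5 : M ^ (1 - η) * ∫ ω, |X 0 ω| ^ (1 + η) ∂μ ≤ M ^ (1 - η) * c := by
      gcongr
    linarith [h1, h2 ▸ h1]
  have hvar : variance T μ ≤ M ^ (1 - η) * c / n := by
    have hvsum : variance (∑ j ∈ Finset.range n, Y j) μ
        = ∑ j ∈ Finset.range n, variance (Y j) μ :=
      IndepFun.variance_sum (fun j _ => hYmem j)
        (fun j _ k _ hjk => hYindep.indepFun hjk)
    have hT2 : variance T μ = ((n:ℝ)⁻¹) ^ 2 * variance (∑ j ∈ Finset.range n, Y j) μ := by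
      rw [← variance_const_mul]
      congr 1
      funext ω
      simp [hT]
    have hsum : ∑ j ∈ Finset.range n, variance (Y j) μ = n * variance (Y 0) μ := by
      rw [Finset.sum_congr rfl fun j _ => (hYident j).variance_eq, Finset.sum_const,
        Finset.card_range, nsmul_eq_mul]
    have hnpos : (0:ℝ) < n := Nat.cast_pos.2 hn
    rw [hT2, hvsum, hsum]
    rw [div_eq_mul_inv, mul_comm (M ^ (1-η) * c)]
    calc ((n:ℝ)⁻¹) ^ 2 * ((n:ℝ) * variance (Y 0) μ)
        ≤ ((n:ℝ)⁻¹) ^ 2 * ((n:ℝ) * (M ^ (1 - η) * c)) := by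
          gcongr
      _ = (n:ℝ)⁻¹ * (M ^ (1 - η) * c) := by
          field_simp
      _ = _ := rfl
  -- the two events
  set E₁ : Set Ω := ⋃ j ∈ Finset.range n, {ω | M < |X j ω|} with hE₁
  set E₂ : Set Ω := {ω | ε / 2 ≤ |T ω - ∫ ω, T ω ∂μ|} with hE₂
  have hsub : {ω | ε < |(n : ℝ)⁻¹ * ∑ j ∈ Finset.range n, X j ω|} ⊆ E₁ ∪ E₂ := by
    intro ω hω
    by_cases h1 : ω ∈ E₁
    · exact Or.inl h1
    · right
      simp only [hE₁, Set.mem_iUnion, Set.mem_setOf_eq, not_exists, not_lt] at h1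
      have hTω : T ω = (n : ℝ)⁻¹ * ∑ j ∈ Finset.range n, X j ω := by
        simp only [hT]
        congr 1
        exact Finset.sum_congr rfl fun j hj => trunc_eq M (h1 j hj)
      have hω' : ε < |T ω| := by rw [hTω]; exact hω
      have habs : |T ω| - |m| ≤ |T ω - m| := abs_sub_abs_le_abs_sub _ _
      show ε / 2 ≤ |T ω - ∫ ω, T ω ∂μ|
      rw [hTmean]
      linarith
  have hE₁bound : (μ E₁).toReal ≤ n * (c / M ^ (1 + η)) := by
    have hMη : (0:ℝ) < M ^ (1 + η) := Real.rpow_pos_of_pos hM _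
    have htail : (μ {ω | M < |X 0 ω|}).toReal ≤ c / M ^ (1 + η) := by
      have hsub2 : {ω | M < |X 0 ω|} ⊆ {ω | M ^ (1 + η) ≤ |X 0 ω| ^ (1 + η)} := by
        intro ω (hω : M < |X 0 ω|)
        exact Real.rpow_le_rpow hM.le hω.le (by linarith)
      have hmarkov := mul_meas_ge_le_integral_of_nonneg
        (Filter.Eventually.of_forall fun ω => Real.rpow_nonneg (abs_nonneg (X 0 ω)) (1 + η))
        hmomInt (M ^ (1 + η))
      have h1 : (μ {ω | M < |X 0 ω|}).toReal
          ≤ (μ {ω | M ^ (1 + η) ≤ |X 0 ω| ^ (1 + η)}).toReal :=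
        ENNReal.toReal_mono (measure_ne_top _ _) (measure_mono hsub2)
      rw [le_div_iff₀ hMη, mul_comm]
      calc M ^ (1 + η) * (μ {ω | M < |X 0 ω|}).toReal
          ≤ M ^ (1 + η) * (μ {ω | M ^ (1 + η) ≤ |X 0 ω| ^ (1 + η)}).toReal := by gcongr
        _ ≤ ∫ ω, |X 0 ω| ^ (1 + η) ∂μ := hmarkov
        _ ≤ c := hmom
    have heq : ∀ j, μ {ω | M < |X j ω|} = μ {ω | M < |X 0 ω|} := by
      intro j
      have : MeasurableSet {x : ℝ | M < |x|} := measurableSet_lt measurable_const measurable_abs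
      exact (hident j).measure_mem_eq this
    calc (μ E₁).toReal ≤ (∑ j ∈ Finset.range n, μ {ω | M < |X j ω|}).toReal :=
          ENNReal.toReal_mono (by
            refine (ENNReal.sum_lt_top.2 fun j _ => measure_lt_top _ _).ne)
            (measure_biUnion_finset_le _ _)
      _ = ∑ j ∈ Finset.range n, (μ {ω | M < |X j ω|}).toReal :=
          ENNReal.toReal_sum fun j _ => measure_ne_top _ _
      _ = ∑ j ∈ Finset.range n, (μ {ω | M < |X 0 ω|}).toReal := by
          exact Finset.sum_congr rfl fun j _ => by rw [heq j]
      _ ≤ ∑ j ∈ Finset.range n, (c / M ^ (1 + η)) :=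
          Finset.sum_le_sum fun j _ => htail
      _ = n * (c / M ^ (1 + η)) := by
          rw [Finset.sum_const, Finset.card_range, nsmul_eq_mul]
  have hE₂bound : (μ E₂).toReal ≤ 4 * c * M ^ (1 - η) / (n * ε ^ 2) := by
    have hTmem : MemLp T 2 μ := by
      have h1 : MemLp (fun ω => ∑ j ∈ Finset.range n, Y j ω) 2 μ := by
        rw [hsumfun]; exact memLp_finsetSum' _ fun j _ => hYmem j
      exact h1.const_mul ((n:ℝ)⁻¹)
    have hcheb := meas_ge_le_variance_div_sq (μ := μ) hTmem (by positivity : (0:ℝ) < ε / 2)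
    have h6 : (μ E₂).toReal ≤ variance T μ / (ε / 2) ^ 2 := by
      have h7 := ENNReal.toReal_mono ENNReal.ofReal_ne_top hcheb
      rwa [ENNReal.toReal_ofReal
        (div_nonneg (variance_nonneg _ _) (by positivity))] at h7
    have hnpos : (0:ℝ) < n := Nat.cast_pos.2 hn
    calc (μ E₂).toReal ≤ variance T μ / (ε / 2) ^ 2 := h6
      _ ≤ (M ^ (1 - η) * c / n) / (ε / 2) ^ 2 := by gcongr
      _ = 4 * c * M ^ (1 - η) / (n * ε ^ 2) := by
          field_simp
          ring
  calc (μ {ω | ε < |(n : ℝ)⁻¹ * ∑ j ∈ Finset.range n, X j ω|}).toReal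
      ≤ (μ (E₁ ∪ E₂)).toReal := by
        exact ENNReal.toReal_mono (measure_ne_top _ _) (measure_mono hsub)
    _ ≤ ((μ E₁) + (μ E₂)).toReal := ENNReal.toReal_mono
        (ENNReal.add_ne_top.2 ⟨measure_ne_top _ _, measure_ne_top _ _⟩) (measure_union_le _ _)
    _ = (μ E₁).toReal + (μ E₂).toReal := ENNReal.toReal_add (measure_ne_top _ _) (measure_ne_top _ _)
    _ ≤ _ := add_le_add hE₁bound hE₂bound

/-- Uniform weak law of large numbers over a family of
distributions with mean zero and uniformly bounded `(1+η)`-th absolute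
moments. -/
theorem uniform_weak_law_of_large_numbers
    {Ω : Type*} [MeasurableSpace Ω] {ι : Type*}
    (P : ι → Measure Ω) (hP : ∀ i, IsProbabilityMeasure (P i))
    (ζ : ℕ → Ω → ℝ) (hmeas : ∀ j, Measurable (ζ j))
    (hindep : ∀ i, iIndepFun ζ (P i))
    (hident : ∀ i j, IdentDistrib (ζ j) (ζ 0) (P i) (P i))
    (η c : ℝ) (hη : 0 < η) (hc : 0 < c)
    (hmom : ∀ i, ∫ ω, |ζ 0 ω| ^ (1 + η) ∂(P i) < c)
    (hmomInt : ∀ i, Integrable (fun ω => |ζ 0 ω| ^ (1 + η)) (P i))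
    (hmean : ∀ i, ∫ ω, ζ 0 ω ∂(P i) = 0) :
    ∀ ε > 0,
      Tendsto (fun n : ℕ => ⨆ i,
          ((P i) {ω | ε < |(n : ℝ)⁻¹ * ∑ j ∈ Finset.range n, ζ j ω|}).toReal)
        atTop (nhds 0) := by
  intro ε hε
  set η' : ℝ := min η 1 with hη'def
  have hη'pos : 0 < η' := lt_min hη one_pos
  have hη'le1 : η' ≤ 1 := min_le_right _ _
  have hη'leη : η' ≤ η := min_le_left _ _
  set c' : ℝ := c + 1 with hc'def
  have hc'pos : 0 < c' := by positivity
  have h2η' : (0:ℝ) < 2 + η' := by linarith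
  -- moments for the reduced exponent
  have hmeasr : Measurable (fun ω => |ζ 0 ω| ^ (1 + η')) := by fun_prop
  have hmomInt' : ∀ i, Integrable (fun ω => |ζ 0 ω| ^ (1 + η')) (P i) := by
    intro i
    haveI := hP i
    refine Integrable.mono ((hmomInt i).add (integrable_const 1))
      hmeasr.aestronglyMeasurable ?_
    filter_upwards with ω
    have h1 : 0 ≤ |ζ 0 ω| ^ (1 + η) := Real.rpow_nonneg (abs_nonneg _) _
    have h2 : |ζ 0 ω| ^ (1 + η') ≤ 1 + |ζ 0 ω| ^ (1 + η) :=
      abs_rpow_le_one_add (1 + η') (1 + η) (by linarith) (by linarith) _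
    have h3 : 0 ≤ |ζ 0 ω| ^ (1 + η') := Real.rpow_nonneg (abs_nonneg _) _
    simp only [Pi.add_apply, Real.norm_eq_abs]
    rw [abs_of_nonneg h3, abs_of_nonneg (by linarith : (0:ℝ) ≤ |ζ 0 ω| ^ (1 + η) + 1)]
    linarith
  have hmom' : ∀ i, ∫ ω, |ζ 0 ω| ^ (1 + η') ∂(P i) ≤ c' := by
    intro i
    haveI := hP i
    calc ∫ ω, |ζ 0 ω| ^ (1 + η') ∂(P i)
        ≤ ∫ ω, (1 + |ζ 0 ω| ^ (1 + η)) ∂(P i) := by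
          refine integral_mono (hmomInt' i) ((integrable_const 1).add (hmomInt i)) ?_
          intro ω
          exact abs_rpow_le_one_add (1 + η') (1 + η) (by linarith) (by linarith) _
      _ = 1 + ∫ ω, |ζ 0 ω| ^ (1 + η) ∂(P i) := by
          rw [integral_add (integrable_const 1) (hmomInt i), integral_const]
          simp
      _ ≤ c' := by linarith [hmom i]
  -- the truncation level and the bounding sequence
  set q : ℝ := 2 / (2 + η') with hqdef
  have hq0 : 0 < q := by positivity
  set Mf : ℕ → ℝ := fun n => (n:ℝ) ^ q with hMf
  set B : ℕ → ℝ :=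
    fun n => n * (c' / Mf n ^ (1 + η')) + 4 * c' * Mf n ^ (1 - η') / (n * ε ^ 2) with hB
  have ha1 : 0 < η' / (2 + η') := by positivity
  have ha2 : 0 < 3 * η' / (2 + η') := by positivity
  have ha3 : 0 < q * η' := by positivity
  -- B tends to zero
  have hBeq : ∀ᶠ n : ℕ in atTop, B n
      = c' * (n:ℝ) ^ (-(η' / (2 + η'))) + (4 * c' / ε ^ 2) * (n:ℝ) ^ (-(3 * η' / (2 + η'))) := by
    filter_upwards [eventually_ge_atTop 1] with n hn
    have hn0 : (0:ℝ) < n := by exact_mod_cast Nat.lt_of_lt_of_le Nat.zero_lt_one hn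
    have e1 : Mf n ^ (1 + η') = (n:ℝ) ^ (q * (1 + η')) := by
      rw [hMf, ← Real.rpow_mul hn0.le]
    have e2 : Mf n ^ (1 - η') = (n:ℝ) ^ (q * (1 - η')) := by
      rw [hMf, ← Real.rpow_mul hn0.le]
    have ee1 : 1 - q * (1 + η') = -(η' / (2 + η')) := by
      rw [hqdef]; field_simp; ring
    have ee2 : q * (1 - η') - 1 = -(3 * η' / (2 + η')) := by
      rw [hqdef]; field_simp; ring
    have t1 : (n:ℝ) * (c' / (n:ℝ) ^ (q * (1 + η'))) = c' * (n:ℝ) ^ (1 - q * (1 + η')) := by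
      rw [Real.rpow_sub hn0, Real.rpow_one]
      field_simp
    have t2 : 4 * c' * (n:ℝ) ^ (q * (1 - η')) / ((n:ℝ) * ε ^ 2)
        = (4 * c' / ε ^ 2) * (n:ℝ) ^ (q * (1 - η') - 1) := by
      rw [Real.rpow_sub hn0, Real.rpow_one]
      field_simp
    simp only [hB, e1, e2, t1, t2, ee1, ee2]
  have hBlim : Tendsto B atTop (nhds 0) := by
    have l1 : Tendsto (fun n : ℕ => c' * (n:ℝ) ^ (-(η' / (2 + η')))) atTop (nhds 0) := by
      have := (tendsto_rpow_neg_atTop ha1).comp tendsto_natCast_atTop_atTop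
      simpa using this.const_mul c'
    have l2 : Tendsto (fun n : ℕ => (4 * c' / ε ^ 2) * (n:ℝ) ^ (-(3 * η' / (2 + η'))))
        atTop (nhds 0) := by
      have := (tendsto_rpow_neg_atTop ha2).comp tendsto_natCast_atTop_atTop
      simpa using this.const_mul (4 * c' / ε ^ 2)
    have := l1.add l2
    rw [add_zero] at this
    exact Tendsto.congr' (hBeq.mono fun n h => h.symm) this
  -- eventual smallness of the bias
  have hsmall : ∀ᶠ n : ℕ in atTop, c' / Mf n ^ η' ≤ ε / 2 := by
    have heq : ∀ᶠ n : ℕ in atTop, c' / Mf n ^ η' = c' * (n:ℝ) ^ (-(q * η')) := by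
      filter_upwards [eventually_ge_atTop 1] with n hn
      have hn0 : (0:ℝ) < n := by exact_mod_cast Nat.lt_of_lt_of_le Nat.zero_lt_one hn
      rw [hMf, ← Real.rpow_mul hn0.le, Real.rpow_neg hn0.le, div_eq_mul_inv]
    have hl : Tendsto (fun n : ℕ => c' / Mf n ^ η') atTop (nhds 0) := by
      have := (tendsto_rpow_neg_atTop ha3).comp tendsto_natCast_atTop_atTop
      have h2 := this.const_mul c'
      rw [mul_zero] at h2
      exact Tendsto.congr' (heq.mono fun n h => h.symm) h2
    exact hl.eventually_le_const (by positivity)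
  -- squeeze
  refine squeeze_zero'
    (Filter.Eventually.of_forall fun n => Real.iSup_nonneg fun i => ENNReal.toReal_nonneg)
    ?_ hBlim
  filter_upwards [hsmall, eventually_ge_atTop 1] with n h1 h2
  have hn0 : 0 < n := h2
  have hMpos : 0 < Mf n := by
    have hn0' : (0:ℝ) < n := by exact_mod_cast hn0
    exact Real.rpow_pos_of_pos hn0' q
  have hBnonneg : 0 ≤ B n := by
    have b1 : (0:ℝ) ≤ (n:ℝ) * (c' / Mf n ^ (1 + η')) := by positivity
    have b2 : (0:ℝ) ≤ 4 * c' * Mf n ^ (1 - η') / ((n:ℝ) * ε ^ 2) := by positivity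
    simp only [hB]
    linarith
  refine Real.iSup_le (fun i => ?_) hBnonneg
  haveI := hP i
  exact key_bound (P i) ζ hmeas (hindep i) (hident i) η' c' hη'pos hη'le1 hc'pos
    (hmom' i) (hmomInt' i) (hmean i) ε hε n hn0 (Mf n) hMpos h1
end

section
/- Let 𝒫 be a family of distributions for sequences (V_n) and (W_n) of real random variables with sup_{P∈𝒫} sup_{t∈ℝ} |P(V_n ≤ t) − Φ(t)| → 0 and W_n − 1 → 0 uniformly in probability over 𝒫. Then sup_{P∈𝒫} sup_{t∈ℝ} |P(V_n / W_n ≤ t) − Φ(t)| → 0. -/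
open MeasureTheory ProbabilityTheory Filter

/-- The standard Gaussian cumulative distribution function `Φ`. -/
noncomputable def stdGaussianCDF (t : ℝ) : ℝ :=
  ((gaussianReal 0 1) (Set.Iic t)).toReal

lemma stdGaussianCDF_nonneg (t : ℝ) : 0 ≤ stdGaussianCDF t := ENNReal.toReal_nonneg

lemma stdGaussianCDF_le_one (t : ℝ) : stdGaussianCDF t ≤ 1 := by
  have h := prob_le_one (μ := gaussianReal 0 1) (s := Set.Iic t)
  simpa [stdGaussianCDF] using ENNReal.toReal_mono ENNReal.one_ne_top h

lemma stdGaussianCDF_mono : Monotone stdGaussianCDF := fun a b h =>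
  ENNReal.toReal_mono (measure_ne_top _ _) (measure_mono (Set.Iic_subset_Iic.2 h))

lemma gaussianPDF_le_one (x : ℝ) : gaussianPDF 0 1 x ≤ 1 := by
  rw [gaussianPDF]
  refine ENNReal.ofReal_le_one.2 ?_
  rw [gaussianPDFReal]
  have h1 : (1:ℝ) ≤ Real.sqrt (2 * Real.pi * (1:NNReal)) := by
    rw [show ((1:NNReal):ℝ) = 1 by norm_num, mul_one]
    rw [show (1:ℝ) = Real.sqrt 1 by simp]
    exact Real.sqrt_le_sqrt (by nlinarith [Real.pi_gt_three])
  have h2 : Real.exp (-(x - 0)^2 / (2 * (1:NNReal))) ≤ 1 := by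
    rw [Real.exp_le_one_iff]
    apply div_nonpos_of_nonpos_of_nonneg
    · simpa using sq_nonneg (x - 0)
    · norm_num
  calc (Real.sqrt (2 * Real.pi * (1:NNReal)))⁻¹ * Real.exp (-(x - 0)^2 / (2 * (1:NNReal)))
      ≤ 1 * 1 := by
        apply mul_le_mul _ h2 (Real.exp_nonneg _) zero_le_one
        exact inv_le_one_of_one_le₀ h1
    _ = 1 := by norm_num

lemma gaussianReal_le_volume {s : Set ℝ} (hs : MeasurableSet s) :
    gaussianReal 0 1 s ≤ volume s := by
  rw [gaussianReal_of_var_ne_zero 0 one_ne_zero, withDensity_apply _ hs]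
  calc ∫⁻ x in s, gaussianPDF 0 1 x ≤ ∫⁻ _x in s, 1 :=
        setLIntegral_mono measurable_const (fun x _ => gaussianPDF_le_one x)
    _ = volume s := by simp

lemma stdGaussianCDF_sub_le {a b : ℝ} (hab : a ≤ b) :
    stdGaussianCDF b - stdGaussianCDF a ≤ b - a := by
  have hsplit : gaussianReal 0 1 (Set.Iic b)
      = gaussianReal 0 1 (Set.Iic a) + gaussianReal 0 1 (Set.Ioc a b) := by
    rw [← Set.Iic_union_Ioc_eq_Iic hab]
    exact measure_union (Set.Iic_disjoint_Ioc le_rfl) measurableSet_Ioc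
  have h1 : stdGaussianCDF b - stdGaussianCDF a = (gaussianReal 0 1 (Set.Ioc a b)).toReal := by
    rw [stdGaussianCDF, stdGaussianCDF, hsplit,
      ENNReal.toReal_add (measure_ne_top _ _) (measure_ne_top _ _)]
    ring
  rw [h1]
  have h2 := gaussianReal_le_volume (measurableSet_Ioc (a := a) (b := b))
  rw [Real.volume_Ioc] at h2
  calc (gaussianReal 0 1 (Set.Ioc a b)).toReal ≤ (ENNReal.ofReal (b - a)).toReal :=
        ENNReal.toReal_mono ENNReal.ofReal_ne_top h2
    _ = b - a := ENNReal.toReal_ofReal (by linarith)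

lemma stdGaussianCDF_tendsto_one :
    Tendsto (fun M : ℕ => stdGaussianCDF M) atTop (nhds 1) := by
  have h := (tendsto_measure_Iic_atTop (gaussianReal 0 1)).comp
    (tendsto_natCast_atTop_atTop (R := ℝ))
  have h2 : Tendsto (fun M : ℕ => stdGaussianCDF M) atTop
      (nhds ((gaussianReal 0 1 Set.univ).toReal)) := by
    exact (ENNReal.tendsto_toReal (measure_ne_top _ _)).comp h
  simpa [measure_univ] using h2

lemma stdGaussianCDF_tendsto_zero :
    Tendsto (fun M : ℕ => stdGaussianCDF (-(M:ℝ))) atTop (nhds 0) := by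
  have hanti : Antitone (fun M : ℕ => Set.Iic (-(M:ℝ))) := by
    intro m n hmn
    exact Set.Iic_subset_Iic.2 (by exact_mod_cast neg_le_neg (Nat.cast_le.2 hmn))
  have h := tendsto_measure_iInter_atTop (μ := gaussianReal 0 1)
    (s := fun M : ℕ => Set.Iic (-(M:ℝ)))
    (fun _ => measurableSet_Iic.nullMeasurableSet) hanti ⟨0, measure_ne_top _ _⟩
  have hempty : (⋂ M : ℕ, Set.Iic (-(M:ℝ))) = ∅ := by
    ext x
    simp only [Set.mem_iInter, Set.mem_Iic, Set.mem_empty_iff_false, iff_false, not_forall]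
    obtain ⟨M, hM⟩ := exists_nat_gt (-x)
    exact ⟨M, by push_neg; linarith⟩
  rw [hempty] at h
  have h2 := (ENNReal.tendsto_toReal (by simp : (gaussianReal 0 1 ∅) ≠ ⊤)).comp h
  simpa [stdGaussianCDF, Function.comp_def] using h2

lemma stdGaussian_modulus {η : ℝ} (hη : 0 < η) :
    ∃ ε : ℝ, 0 < ε ∧ ε < 1 ∧
      ∀ t : ℝ, stdGaussianCDF (t + |t| * ε) - stdGaussianCDF (t - |t| * ε) ≤ η := by
  have h1 : ∀ᶠ M : ℕ in atTop, 1 - η/2 < stdGaussianCDF M :=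
    stdGaussianCDF_tendsto_one.eventually_const_lt (by linarith)
  have h0 : ∀ᶠ M : ℕ in atTop, stdGaussianCDF (-(M:ℝ)) < η/2 :=
    stdGaussianCDF_tendsto_zero.eventually_lt_const (by linarith)
  obtain ⟨M, ⟨hM1, hM0⟩, hMge⟩ := ((h1.and h0).and (eventually_ge_atTop 1)).exists
  have hMpos : (0:ℝ) < M := by exact_mod_cast Nat.lt_of_lt_of_le Nat.zero_lt_one hMge
  refine ⟨min (1/2) (η / (4 * M)), lt_min (by norm_num) (by positivity),
    lt_of_le_of_lt (min_le_left _ _) (by norm_num), fun t => ?_⟩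
  set ε : ℝ := min (1/2) (η / (4 * M)) with hεdef
  have hε0 : 0 < ε := lt_min (by norm_num) (by positivity)
  have hεhalf : ε ≤ 1/2 := min_le_left _ _
  have hεM : ε ≤ η / (4 * M) := min_le_right _ _
  rcases le_or_gt |t| (2 * M) with ht | ht
  · -- central region: density bound
    have := stdGaussianCDF_sub_le (a := t - |t| * ε) (b := t + |t| * ε)
      (by nlinarith [abs_nonneg t])
    have h2 : (t + |t| * ε) - (t - |t| * ε) = 2 * (|t| * ε) := by ring
    have h3 : |t| * ε ≤ (2 * M) * (η / (4 * M)) :=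
      mul_le_mul ht hεM (le_of_lt hε0) (by positivity)
    have h4 : (2 * M) * (η / (4 * M)) = η / 2 := by field_simp; ring
    linarith
  · rcases le_or_gt 0 t with htpos | htneg
    · -- right tail
      have habs : |t| = t := abs_of_nonneg htpos
      have hlow : (M:ℝ) ≤ t - |t| * ε := by
        rw [habs]; nlinarith
      have h5 : stdGaussianCDF M ≤ stdGaussianCDF (t - |t| * ε) := stdGaussianCDF_mono hlow
      have h6 := stdGaussianCDF_le_one (t + |t| * ε)
      linarith
    · -- left tail
      have habs : |t| = -t := abs_of_neg htneg
      have hup : t + |t| * ε ≤ -(M:ℝ) := by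
        rw [habs]; nlinarith
      have h5 : stdGaussianCDF (t + |t| * ε) ≤ stdGaussianCDF (-(M:ℝ)) :=
        stdGaussianCDF_mono hup
      have h6 := stdGaussianCDF_nonneg (t - |t| * ε)
      linarith


/-- Uniform Slutsky lemma (ratio form): if `V n` is uniformly
asymptotically standard Gaussian over the family and `W n − 1 = o_𝒫(1)`, then
`V n / W n` is uniformly asymptotically standard Gaussian. -/
theorem uniform_slutsky_div
    {Ω : Type*} [MeasurableSpace Ω] {ι : Type*}
    (P : ι → Measure Ω) (hP : ∀ i, IsProbabilityMeasure (P i))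
    (V W : ℕ → Ω → ℝ) (hV : ∀ n, Measurable (V n)) (hW : ∀ n, Measurable (W n))
    (hVconv : Tendsto (fun n : ℕ =>
        ⨆ i, ⨆ t : ℝ, |((P i) {ω | V n ω ≤ t}).toReal - stdGaussianCDF t|)
      atTop (nhds 0))
    (hWop : ∀ ε > 0,
      Tendsto (fun n : ℕ => ⨆ i, ((P i) {ω | ε < |W n ω - 1|}).toReal)
        atTop (nhds 0)) :
    Tendsto (fun n : ℕ =>
        ⨆ i, ⨆ t : ℝ, |((P i) {ω | V n ω / W n ω ≤ t}).toReal - stdGaussianCDF t|)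
      atTop (nhds 0) := by
  rw [Metric.tendsto_nhds]
  intro η hη
  obtain ⟨ε, hε0, hε1, hmod⟩ := stdGaussian_modulus (show (0:ℝ) < η/3 by linarith)
  have hD := hVconv.eventually_lt_const (show (0:ℝ) < η/3 by linarith)
  have hB := (hWop ε hε0).eventually_lt_const (show (0:ℝ) < η/3 by linarith)
  filter_upwards [hD, hB] with n hDn hBn
  -- basic probability bounds
  have hple : ∀ (j : ι) (s : Set Ω), ((P j) s).toReal ≤ 1 := by
    intro j s
    haveI := hP j
    have h := prob_le_one (μ := P j) (s := s)
    simpa using ENNReal.toReal_mono ENNReal.one_ne_top h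
  have habs2 : ∀ (j : ι) (A : Set Ω) (t' : ℝ),
      |((P j) A).toReal - stdGaussianCDF t'| ≤ 2 := by
    intro j A t'
    have h1 := hple j A
    have h2 : (0:ℝ) ≤ ((P j) A).toReal := ENNReal.toReal_nonneg
    have h3 := stdGaussianCDF_le_one t'
    have h4 := stdGaussianCDF_nonneg t'
    exact abs_le.2 ⟨by linarith, by linarith⟩
  set Dn : ℝ := ⨆ i, ⨆ t : ℝ, |((P i) {ω | V n ω ≤ t}).toReal - stdGaussianCDF t| with hDndef
  set Bn : ℝ := ⨆ i, ((P i) {ω | ε < |W n ω - 1|}).toReal with hBndef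
  have hDle : ∀ (j : ι) (t' : ℝ),
      |((P j) {ω | V n ω ≤ t'}).toReal - stdGaussianCDF t'| ≤ Dn := by
    intro j t'
    have hbdd1 : BddAbove (Set.range fun t'' : ℝ =>
        |((P j) {ω | V n ω ≤ t''}).toReal - stdGaussianCDF t''|) :=
      ⟨2, Set.forall_mem_range.2 fun t'' => habs2 j _ t''⟩
    have step1 := le_ciSup hbdd1 t'
    have hbdd2 : BddAbove (Set.range fun i : ι =>
        ⨆ t'' : ℝ, |((P i) {ω | V n ω ≤ t''}).toReal - stdGaussianCDF t''|) :=
      ⟨2, Set.forall_mem_range.2 fun i =>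
        Real.iSup_le (fun t'' => habs2 i _ t'') (by norm_num)⟩
    exact step1.trans (le_ciSup hbdd2 j)
  have hBle : ∀ j : ι, ((P j) {ω | ε < |W n ω - 1|}).toReal ≤ Bn := by
    intro j
    exact le_ciSup ⟨1, Set.forall_mem_range.2 fun j' => hple j' _⟩ j
  have hDnonneg : 0 ≤ Dn := Real.iSup_nonneg fun i =>
    Real.iSup_nonneg fun t => abs_nonneg _
  have hBnonneg : 0 ≤ Bn := Real.iSup_nonneg fun i => ENNReal.toReal_nonneg
  -- key pointwise bound
  have key : ∀ (i : ι) (t : ℝ),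
      |((P i) {ω | V n ω / W n ω ≤ t}).toReal - stdGaussianCDF t| ≤ Dn + Bn + η/3 := by
    intro i t
    have htε : 0 ≤ |t| * ε := by positivity
    -- set inclusions
    have hsub1 : {ω | V n ω / W n ω ≤ t}
        ⊆ {ω | V n ω ≤ t + |t| * ε} ∪ {ω | ε < |W n ω - 1|} := by
      intro ω hω
      by_cases hb : ε < |W n ω - 1|
      · exact Or.inr hb
      · push_neg at hb
        left
        have h1 := abs_le.1 hb
        have hWpos : 0 < W n ω := by linarith [h1.1]
        have h2 : V n ω ≤ t * W n ω := (div_le_iff₀ hWpos).1 hω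
        have ha : t * (W n ω - 1) ≤ |t| * ε := by
          calc t * (W n ω - 1) ≤ |t * (W n ω - 1)| := le_abs_self _
            _ = |t| * |W n ω - 1| := abs_mul _ _
            _ ≤ |t| * ε := mul_le_mul_of_nonneg_left hb (abs_nonneg t)
        have h3 : t * W n ω = t + t * (W n ω - 1) := by ring
        show V n ω ≤ t + |t| * ε
        linarith
    have hsub2 : {ω | V n ω ≤ t - |t| * ε}
        ⊆ {ω | V n ω / W n ω ≤ t} ∪ {ω | ε < |W n ω - 1|} := by
      intro ω hω
      by_cases hb : ε < |W n ω - 1|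
      · exact Or.inr hb
      · push_neg at hb
        left
        have h1 := abs_le.1 hb
        have hWpos : 0 < W n ω := by linarith [h1.1]
        have ha : -(|t| * ε) ≤ t * (W n ω - 1) := by
          have := (abs_le.1 (by
            calc |t * (W n ω - 1)| = |t| * |W n ω - 1| := abs_mul _ _
              _ ≤ |t| * ε := mul_le_mul_of_nonneg_left hb (abs_nonneg t))).1
          linarith
        have h3 : t * W n ω = t + t * (W n ω - 1) := by ring
        have hVω : V n ω ≤ t - |t| * ε := hω
        show V n ω / W n ω ≤ t
        rw [div_le_iff₀ hWpos]
        linarith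
    -- measure arithmetic
    have hmeas : ∀ (A S T : Set Ω), A ⊆ S ∪ T →
        ((P i) A).toReal ≤ ((P i) S).toReal + ((P i) T).toReal := by
      intro A S T hAST
      have h1 : (P i) A ≤ (P i) S + (P i) T :=
        (measure_mono hAST).trans (measure_union_le _ _)
      calc ((P i) A).toReal ≤ ((P i) S + (P i) T).toReal :=
            ENNReal.toReal_mono
              (ENNReal.add_ne_top.2 ⟨measure_ne_top _ _, measure_ne_top _ _⟩) h1
        _ = ((P i) S).toReal + ((P i) T).toReal :=
            ENNReal.toReal_add (measure_ne_top _ _) (measure_ne_top _ _)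
    have hup := hmeas _ _ _ hsub1
    have hdown := hmeas _ _ _ hsub2
    -- gaussian modulus bounds
    have hg1 := hmod t
    have hg2 : stdGaussianCDF (t - |t| * ε) ≤ stdGaussianCDF t :=
      stdGaussianCDF_mono (by linarith)
    have hg3 : stdGaussianCDF t ≤ stdGaussianCDF (t + |t| * ε) :=
      stdGaussianCDF_mono (by linarith)
    have hd1 := abs_le.1 (hDle i (t + |t| * ε))
    have hd2 := abs_le.1 (hDle i (t - |t| * ε))
    have hb1 := hBle i
    exact abs_le.2 ⟨by linarith [hd1.1, hd2.1, hd1.2, hd2.2], by linarith [hd1.1, hd2.1, hd1.2, hd2.2]⟩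
  have hEnonneg : (0:ℝ) ≤ ⨆ i, ⨆ t : ℝ,
      |((P i) {ω | V n ω / W n ω ≤ t}).toReal - stdGaussianCDF t| :=
    Real.iSup_nonneg fun i => Real.iSup_nonneg fun t => abs_nonneg _
  have hle : (⨆ i, ⨆ t : ℝ,
      |((P i) {ω | V n ω / W n ω ≤ t}).toReal - stdGaussianCDF t|) ≤ Dn + Bn + η/3 :=
    Real.iSup_le (fun i => Real.iSup_le (key i) (by linarith)) (by linarith)
  rw [Real.dist_eq, sub_zero, abs_of_nonneg hEnonneg]
  linarith
end

section
/- Fix design points z_1,…,z_n in a set 𝒵 and suppose x_i = f(z_i) + ε_i where the ε_i have variance at most σ², are pairwise uncorrelated, and f lies in an RKHS ℋ with kernel k. Let K ∈ ℝ^{n×n} have entries K_{ij} = k(z_i, z_j)/n with eigenvalues μ̂_1 ≥ … ≥ μ̂_n ≥ 0, and let f̂_λ be the kernel ridge regression estimator with penalty λ‖h‖²_ℋ. Then (1/n) 𝔼[∑_{i=1}^n (f(z_i) − f̂_λ(z_i))²] ≤ (σ²/n) ∑_{i=1}^n μ̂_i²/(μ̂_i + λ)² + ‖f‖²_ℋ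 λ/4. -/
open MeasureTheory Matrix
open scoped RealInnerProductSpace

lemma krr_integrable_mul_of_L2 {Ω : Type*} [MeasurableSpace Ω] {μ : Measure Ω}
    {f g : Ω → ℝ} (hf : MemLp f 2 μ) (hg : MemLp g 2 μ) :
    Integrable (fun ω => f ω * g ω) μ := by
  have h : MemLp (f • g) 1 μ :=
    hg.smul hf (hpqr := ⟨by rw [inv_one]; exact ENNReal.inv_two_add_inv_two⟩)
  exact memLp_one_iff_integrable.mp h

lemma krr_integral_lemma {Ω : Type*} [MeasurableSpace Ω] (μ : Measure Ω) [IsProbabilityMeasure μ]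
    (n : ℕ) (ε : Ω → Fin n → ℝ)
    (hmeanzero : ∀ i, ∫ ω, ε ω i ∂μ = 0)
    (hcov : ∀ i j, i ≠ j → ∫ ω, ε ω i * ε ω j ∂μ = 0)
    (hL2 : ∀ i, MemLp (fun ω => ε ω i) 2 μ)
    (A : Matrix (Fin n) (Fin n) ℝ) (b : Fin n → ℝ) :
    ∫ ω, ∑ i, (b i - ∑ j, A i j * ε ω j) ^ 2 ∂μ
      = ∑ i, (b i ^ 2 + ∑ j, A i j ^ 2 * ∫ ω, (ε ω j) ^ 2 ∂μ) := by
  have hInt1 : ∀ j, Integrable (fun ω => ε ω j) μ := fun j => (hL2 j).integrable one_le_two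
  have hIntMul : ∀ j k, Integrable (fun ω => ε ω j * ε ω k) μ := fun j k =>
    krr_integrable_mul_of_L2 (hL2 j) (hL2 k)
  have hrw : ∀ (i : Fin n) (ω : Ω), (b i - ∑ j, A i j * ε ω j) ^ 2
      = b i ^ 2 + (∑ j, (-2 * b i * A i j) * ε ω j)
        + ∑ j, ∑ k, (A i j * A i k) * (ε ω j * ε ω k) := by
    intro i ω
    have h1 : ∑ j, (-2 * b i * A i j) * ε ω j = -2 * b i * ∑ j, A i j * ε ω j := by
      rw [Finset.mul_sum]; exact Finset.sum_congr rfl fun j _ => by ring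
    have h2 : (∑ j, A i j * ε ω j) ^ 2 = ∑ j, ∑ k, (A i j * A i k) * (ε ω j * ε ω k) := by
      rw [pow_two, Finset.sum_mul_sum]
      exact Finset.sum_congr rfl fun j _ => Finset.sum_congr rfl fun k _ => by ring
    rw [h1, ← h2]; ring
  have hIB : ∀ i, Integrable (fun ω => ∑ j, (-2 * b i * A i j) * ε ω j) μ := fun i =>
    integrable_finset_sum _ fun j _ => (hInt1 j).const_mul _
  have hIC : ∀ i, Integrable (fun ω => ∑ j, ∑ k, (A i j * A i k) * (ε ω j * ε ω k)) μ := fun i =>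
    integrable_finset_sum _ fun j _ => integrable_finset_sum _ fun k _ => (hIntMul j k).const_mul _
  have hIterm : ∀ i, Integrable (fun ω => (b i - ∑ j, A i j * ε ω j) ^ 2) μ := by
    intro i
    have : (fun ω => (b i - ∑ j, A i j * ε ω j) ^ 2)
        = fun ω => b i ^ 2 + (∑ j, (-2 * b i * A i j) * ε ω j)
          + ∑ j, ∑ k, (A i j * A i k) * (ε ω j * ε ω k) := funext fun ω => hrw i ω
    rw [this]
    exact ((integrable_const _).add (hIB i)).add (hIC i)
  rw [integral_finset_sum _ fun i _ => hIterm i]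
  refine Finset.sum_congr rfl fun i _ => ?_
  calc ∫ ω, (b i - ∑ j, A i j * ε ω j) ^ 2 ∂μ
      = ∫ ω, (b i ^ 2 + (∑ j, (-2 * b i * A i j) * ε ω j)
          + ∑ j, ∑ k, (A i j * A i k) * (ε ω j * ε ω k)) ∂μ := by
        exact integral_congr_ae (Filter.Eventually.of_forall fun ω => hrw i ω)
    _ = (∫ ω, (b i ^ 2 + ∑ j, (-2 * b i * A i j) * ε ω j) ∂μ)
          + ∫ ω, ∑ j, ∑ k, (A i j * A i k) * (ε ω j * ε ω k) ∂μ :=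
        integral_add ((integrable_const _).add (hIB i)) (hIC i)
    _ = b i ^ 2 + ∑ j, A i j ^ 2 * ∫ ω, (ε ω j) ^ 2 ∂μ := by
        rw [integral_add (integrable_const _) (hIB i), integral_const]
        simp only [measure_univ, probReal_univ, ENNReal.toReal_one, smul_eq_mul, one_mul]
        have hB : ∫ ω, ∑ j, (-2 * b i * A i j) * ε ω j ∂μ = 0 := by
          rw [integral_finset_sum _ fun j _ => (hInt1 j).const_mul _]
          simp only [integral_const_mul, hmeanzero, mul_zero, Finset.sum_const_zero]
        have hC : ∫ ω, ∑ j, ∑ k, (A i j * A i k) * (ε ω j * ε ω k) ∂μ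
            = ∑ j, A i j ^ 2 * ∫ ω, (ε ω j) ^ 2 ∂μ := by
          rw [integral_finset_sum _ fun j _ =>
            integrable_finset_sum _ fun k _ => (hIntMul j k).const_mul _]
          refine Finset.sum_congr rfl fun j _ => ?_
          rw [integral_finset_sum _ fun k _ => (hIntMul j k).const_mul _]
          rw [Finset.sum_eq_single j]
          · rw [integral_const_mul]
            have : ∫ ω, ε ω j * ε ω j ∂μ = ∫ ω, (ε ω j) ^ 2 ∂μ :=
              integral_congr_ae (Filter.Eventually.of_forall fun ω => (pow_two _).symm)
            rw [this]; ring
          · intro k _ hkj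
            rw [integral_const_mul, hcov j k (Ne.symm hkj), mul_zero]
          · intro h; exact absurd (Finset.mem_univ j) h
        rw [hB, hC]; ring

lemma krr_gram_lemma {𝒵 H : Type*} [NormedAddCommGroup H] [InnerProductSpace ℝ H]
    (n : ℕ) (z : Fin n → 𝒵) (φ : 𝒵 → H)
    (K : Matrix (Fin n) (Fin n) ℝ) (hK : ∀ i j, K i j = ⟪φ (z i), φ (z j)⟫ / n)
    (v : Fin n → ℝ) :
    v ⬝ᵥ (K *ᵥ v) = ⟪∑ i, v i • φ (z i), ∑ i, v i • φ (z i)⟫ / n := by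
  simp only [dotProduct, Matrix.mulVec, dotProduct, hK, sum_inner, inner_sum,
    real_inner_smul_left, real_inner_smul_right, Finset.sum_div, Finset.mul_sum]
  refine Finset.sum_congr rfl fun i _ => Finset.sum_congr rfl fun j _ => by
    rw [real_inner_comm (φ (z j))]; ring

lemma krr_psd_lemma {𝒵 H : Type*} [NormedAddCommGroup H] [InnerProductSpace ℝ H]
    (n : ℕ) (z : Fin n → 𝒵) (φ : 𝒵 → H)
    (K : Matrix (Fin n) (Fin n) ℝ) (hK : ∀ i j, K i j = ⟪φ (z i), φ (z j)⟫ / n)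
    (hKherm : K.IsHermitian) : K.PosSemidef := by
  refine posSemidef_iff_dotProduct_mulVec.mpr ⟨hKherm, fun x => ?_⟩
  have hx : star x = x := by simp
  rw [hx, krr_gram_lemma n z φ K hK x]
  have := real_inner_self_nonneg (x := ∑ i, x i • φ (z i))
  positivity

lemma krr_inv_lemma (n : ℕ) (K : Matrix (Fin n) (Fin n) ℝ) (hKherm : K.IsHermitian)
    (hnn : ∀ i, 0 ≤ hKherm.eigenvalues i) (lam : ℝ) (hlam : 0 < lam) :
    (K + lam • (1 : Matrix (Fin n) (Fin n) ℝ))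
      * (K + lam • (1 : Matrix (Fin n) (Fin n) ℝ))⁻¹ = 1 := by
  set U : Matrix (Fin n) (Fin n) ℝ := (hKherm.eigenvectorUnitary : Matrix (Fin n) (Fin n) ℝ)
  set μi := hKherm.eigenvalues
  have hU1 : U * star U = 1 := Matrix.mem_unitaryGroup_iff.mp (hKherm.eigenvectorUnitary).2
  have hU2 : star U * U = 1 := Matrix.mem_unitaryGroup_iff'.mp (hKherm.eigenvectorUnitary).2
  have hspec : K = U * diagonal μi * star U := by
    have h := hKherm.spectral_theorem
    simpa [RCLike.ofReal_real_eq_id] using h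
  have hpos : ∀ i, 0 < μi i + lam := fun i => by have := hnn i; linarith
  set KL := K + lam • (1 : Matrix (Fin n) (Fin n) ℝ) with hKLdef
  have hKL : KL = U * diagonal (fun i => μi i + lam) * star U := by
    rw [hKLdef, hspec]
    have h1 : lam • (1 : Matrix (Fin n) (Fin n) ℝ) = U * diagonal (fun _ => lam) * star U := by
      rw [← smul_one_eq_diagonal]
      rw [Matrix.mul_smul, Matrix.smul_mul, mul_one, hU1]
    rw [h1, ← Matrix.add_mul, ← Matrix.mul_add, diagonal_add]
  have hmain : KL * (U * diagonal (fun i => (μi i + lam)⁻¹) * star U) = 1 := by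
    rw [hKL]
    calc U * diagonal (fun i => μi i + lam) * star U *
          (U * diagonal (fun i => (μi i + lam)⁻¹) * star U)
        = U * (diagonal (fun i => μi i + lam) * (star U * U) *
            diagonal (fun i => (μi i + lam)⁻¹)) * star U := by
          noncomm_ring
      _ = 1 := by
          rw [hU2, mul_one, diagonal_mul_diagonal]
          have : (fun i => (μi i + lam) * (μi i + lam)⁻¹) = fun _ => (1:ℝ) := by
            funext i; exact mul_inv_cancel₀ (hpos i).ne'
          rw [this, diagonal_one, mul_one, hU1]
  rw [Matrix.inv_eq_right_inv hmain]
  exact hmain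

lemma krr_frob_lemma (n : ℕ) (K : Matrix (Fin n) (Fin n) ℝ) (hKherm : K.IsHermitian)
    (hnn : ∀ i, 0 ≤ hKherm.eigenvalues i) (lam : ℝ) (hlam : 0 < lam) :
    ∑ i, ∑ j, ((K * (K + lam • (1 : Matrix (Fin n) (Fin n) ℝ))⁻¹) i j) ^ 2
      = ∑ i, (hKherm.eigenvalues i) ^ 2 / (hKherm.eigenvalues i + lam) ^ 2 := by
  set U : Matrix (Fin n) (Fin n) ℝ := (hKherm.eigenvectorUnitary : Matrix (Fin n) (Fin n) ℝ)
  set μi := hKherm.eigenvalues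
  have hU1 : U * star U = 1 := Matrix.mem_unitaryGroup_iff.mp (hKherm.eigenvectorUnitary).2
  have hU2 : star U * U = 1 := Matrix.mem_unitaryGroup_iff'.mp (hKherm.eigenvectorUnitary).2
  have hspec : K = U * diagonal μi * star U := by
    have h := hKherm.spectral_theorem
    simpa [RCLike.ofReal_real_eq_id] using h
  have hpos : ∀ i, 0 < μi i + lam := fun i => by have := hnn i; linarith
  set KL := K + lam • (1 : Matrix (Fin n) (Fin n) ℝ) with hKLdef
  have hKL : KL = U * diagonal (fun i => μi i + lam) * star U := by
    rw [hKLdef, hspec]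
    have h1 : lam • (1 : Matrix (Fin n) (Fin n) ℝ) = U * diagonal (fun _ => lam) * star U := by
      rw [← smul_one_eq_diagonal]
      rw [Matrix.mul_smul, Matrix.smul_mul, mul_one, hU1]
    rw [h1, ← Matrix.add_mul, ← Matrix.mul_add, diagonal_add]
  have hKLinv : KL⁻¹ = U * diagonal (fun i => (μi i + lam)⁻¹) * star U := by
    apply Matrix.inv_eq_right_inv
    rw [hKL]
    calc U * diagonal (fun i => μi i + lam) * star U *
          (U * diagonal (fun i => (μi i + lam)⁻¹) * star U)
        = U * (diagonal (fun i => μi i + lam) * (star U * U) *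
            diagonal (fun i => (μi i + lam)⁻¹)) * star U := by
          noncomm_ring
      _ = 1 := by
          rw [hU2, mul_one, diagonal_mul_diagonal]
          have : (fun i => (μi i + lam) * (μi i + lam)⁻¹) = fun _ => (1:ℝ) := by
            funext i; exact mul_inv_cancel₀ (hpos i).ne'
          rw [this, diagonal_one, mul_one, hU1]
  set g : Fin n → ℝ := fun i => μi i * (μi i + lam)⁻¹ with hg
  set M := K * KL⁻¹ with hMdef
  have hM : M = U * diagonal g * star U := by
    rw [hMdef, hspec, hKLinv]
    calc U * diagonal μi * star U * (U * diagonal (fun i => (μi i + lam)⁻¹) * star U)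
        = U * (diagonal μi * (star U * U) * diagonal (fun i => (μi i + lam)⁻¹)) * star U := by
          noncomm_ring
      _ = U * diagonal g * star U := by rw [hU2, mul_one, diagonal_mul_diagonal]
  have hMsymm : Mᵀ = M := by
    rw [hM]
    have hsU : star U = Uᵀ := conjTranspose_eq_transpose_of_trivial U
    simp [hsU, Matrix.transpose_mul, Matrix.mul_assoc]
  have htr : ∑ i, ∑ j, (M i j) ^ 2 = Matrix.trace (Mᵀ * M) := by
    rw [Matrix.trace]
    rw [Finset.sum_comm]
    apply Finset.sum_congr rfl
    intro j _
    simp [Matrix.mul_apply, Matrix.diag, pow_two]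
  rw [htr, hMsymm, hM]
  have : U * diagonal g * star U * (U * diagonal g * star U)
      = U * (diagonal g * diagonal g) * star U := by
    calc U * diagonal g * star U * (U * diagonal g * star U)
        = U * (diagonal g * (star U * U) * diagonal g) * star U := by noncomm_ring
      _ = _ := by rw [hU2, mul_one]
  rw [this, Matrix.trace_mul_cycle, ← Matrix.mul_assoc, hU2, one_mul, diagonal_mul_diagonal,
    trace_diagonal]
  apply Finset.sum_congr rfl
  intro i _
  rw [hg]
  field_simp

/-- Fixed-design kernel ridge regression bound.  The RKHS is
represented via a feature map `φ : 𝒵 → H` into a real Hilbert space, the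
regression function is `f z = ⟪wf, φ z⟫` with `‖f‖_ℋ = ‖wf‖`, the kernel is
`k z z' = ⟪φ z, φ z'⟫`, and by the representer theorem the kernel ridge
regression fitted values are `K (K + λ I)⁻¹ X` where `K_{ij} = k(z_i,z_j)/n`.
Then the expected in-sample mean squared error is bounded by the variance term
`(σ²/n) ∑ μ̂ᵢ²/(μ̂ᵢ+λ)²` plus the bias term `‖f‖²_ℋ λ/4`. -/
theorem kernel_ridge_regression_bound
    {Ω : Type*} [MeasurableSpace Ω] (μ : Measure Ω) [IsProbabilityMeasure μ]
    {𝒵 : Type*} {H : Type*} [NormedAddCommGroup H] [InnerProductSpace ℝ H]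
    (n : ℕ) (hn : 0 < n) (z : Fin n → 𝒵) (φ : 𝒵 → H) (wf : H)
    (f : 𝒵 → ℝ) (hf : ∀ zz, f zz = ⟪wf, φ zz⟫)
    (ε : Ω → Fin n → ℝ) (x : Ω → Fin n → ℝ)
    (hx : ∀ ω i, x ω i = f (z i) + ε ω i)
    (σ : ℝ)
    (hmeanzero : ∀ i, ∫ ω, ε ω i ∂μ = 0)
    (hvar : ∀ i, ∫ ω, (ε ω i) ^ 2 ∂μ ≤ σ ^ 2)
    (hcov : ∀ i j, i ≠ j → ∫ ω, ε ω i * ε ω j ∂μ = 0)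
    (hL2 : ∀ i, MemLp (fun ω => ε ω i) 2 μ)
    (K : Matrix (Fin n) (Fin n) ℝ)
    (hK : ∀ i j, K i j = ⟪φ (z i), φ (z j)⟫ / n)
    (hKherm : K.IsHermitian)
    (lam : ℝ) (hlam : 0 < lam)
    (fhat : Ω → Fin n → ℝ)
    (hfhat : ∀ ω, fhat ω = (K * (K + lam • (1 : Matrix (Fin n) (Fin n) ℝ))⁻¹).mulVec (x ω)) :
    (1 / n) * ∫ ω, ∑ i, (f (z i) - fhat ω i) ^ 2 ∂μ ≤
      (σ ^ 2 / n) * ∑ i, (hKherm.eigenvalues i) ^ 2 / (hKherm.eigenvalues i + lam) ^ 2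
        + ‖wf‖ ^ 2 * lam / 4 := by
  have hKpsd : K.PosSemidef := krr_psd_lemma n z φ K hK hKherm
  have hnn : ∀ i, 0 ≤ hKherm.eigenvalues i := fun i => hKpsd.eigenvalues_nonneg i
  set KL := K + lam • (1 : Matrix (Fin n) (Fin n) ℝ) with hKLdef
  set M := K * KL⁻¹ with hMdef
  set F : Fin n → ℝ := fun i => f (z i) with hF
  set b : Fin n → ℝ := fun i => F i - (M *ᵥ F) i with hb
  have hN : (0:ℝ) < n := by exact_mod_cast hn
  -- pointwise decomposition
  have hpoint : ∀ ω i, f (z i) - fhat ω i = b i - ∑ j, M i j * ε ω j := by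
    intro ω i
    rw [hfhat]
    simp only [hb, hF, Matrix.mulVec, dotProduct, hx, mul_add, Finset.sum_add_distrib]
    ring
  -- compute the integral
  have hint : ∫ ω, ∑ i, (f (z i) - fhat ω i) ^ 2 ∂μ
      = ∑ i, (b i ^ 2 + ∑ j, M i j ^ 2 * ∫ ω, (ε ω j) ^ 2 ∂μ) := by
    rw [show (fun ω => ∑ i, (f (z i) - fhat ω i) ^ 2)
        = fun ω => ∑ i, (b i - ∑ j, M i j * ε ω j) ^ 2 from
      funext fun ω => Finset.sum_congr rfl fun i _ => by rw [hpoint]]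
    exact krr_integral_lemma μ n ε hmeanzero hcov hL2 M b
  -- variance bound
  have hvarbound : ∑ i, ∑ j, M i j ^ 2 * ∫ ω, (ε ω j) ^ 2 ∂μ
      ≤ σ ^ 2 * ∑ i, ∑ j, M i j ^ 2 := by
    rw [Finset.mul_sum]
    refine Finset.sum_le_sum fun i _ => ?_
    rw [Finset.mul_sum]
    refine Finset.sum_le_sum fun j _ => ?_
    calc M i j ^ 2 * ∫ ω, (ε ω j) ^ 2 ∂μ ≤ M i j ^ 2 * σ ^ 2 :=
          mul_le_mul_of_nonneg_left (hvar j) (sq_nonneg _)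
      _ = σ ^ 2 * M i j ^ 2 := by ring
  have hfrob : ∑ i, ∑ j, M i j ^ 2
      = ∑ i, (hKherm.eigenvalues i) ^ 2 / (hKherm.eigenvalues i + lam) ^ 2 :=
    krr_frob_lemma n K hKherm hnn lam hlam
  -- bias bound
  have hinv : KL * KL⁻¹ = 1 := krr_inv_lemma n K hKherm hnn lam hlam
  set v : Fin n → ℝ := KL⁻¹ *ᵥ F with hv
  have hFv : KL *ᵥ v = F := by
    rw [hv, Matrix.mulVec_mulVec, hinv, Matrix.one_mulVec]
  have hKLv : KL *ᵥ v = K *ᵥ v + lam • v := by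
    rw [hKLdef, Matrix.add_mulVec, Matrix.smul_mulVec, Matrix.one_mulVec]
  have hbv : ∀ i, b i = lam * v i := by
    intro i
    have hMF : M *ᵥ F = K *ᵥ v := by
      rw [hMdef, ← Matrix.mulVec_mulVec, ← hv]
    have hFi : F i = (K *ᵥ v) i + lam * v i := by
      conv_lhs => rw [← hFv]
      rw [hKLv]; simp
    rw [hb]
    simp only [hMF, hFi]
    ring
  set w : H := ∑ i, v i • φ (z i) with hw
  have h1 : ⟪wf, w⟫ = ∑ i, v i * F i := by
    rw [hw, inner_sum]
    refine Finset.sum_congr rfl fun i _ => ?_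
    rw [real_inner_smul_right, ← hf (z i)]
  have h2 : v ⬝ᵥ (K *ᵥ v) = ⟪w, w⟫ / n := krr_gram_lemma n z φ K hK v
  have h3 : ∑ i, v i * F i = v ⬝ᵥ (K *ᵥ v) + lam * (v ⬝ᵥ v) := by
    have : ∑ i, v i * F i = v ⬝ᵥ F := rfl
    rw [this, ← hFv, hKLv, dotProduct_add, dotProduct_smul]
    simp [smul_eq_mul]
  have hs : 0 ≤ v ⬝ᵥ v := by
    rw [dotProduct]
    exact Finset.sum_nonneg fun i _ => mul_self_nonneg _
  have hNt : (n:ℝ) * (v ⬝ᵥ (K *ᵥ v)) = ‖w‖ ^ 2 := by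
    rw [h2, real_inner_self_eq_norm_sq]
    field_simp
  have hkey : v ⬝ᵥ (K *ᵥ v) + lam * (v ⬝ᵥ v) ≤ ‖wf‖ * ‖w‖ := by
    rw [← h3, ← h1]
    exact real_inner_le_norm wf w
  have hfin : lam * (v ⬝ᵥ v) ≤ (n:ℝ) * ‖wf‖ ^ 2 / 4 := by
    nlinarith [sq_nonneg (‖w‖ - (n:ℝ) * ‖wf‖ / 2), mul_le_mul_of_nonneg_left hkey hN.le,
      hN, norm_nonneg w, norm_nonneg wf]
  have hbias : (1 / (n:ℝ)) * ∑ i, b i ^ 2 ≤ ‖wf‖ ^ 2 * lam / 4 := by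
    have hsum : ∑ i, b i ^ 2 = lam ^ 2 * (v ⬝ᵥ v) := by
      rw [dotProduct, Finset.mul_sum]
      exact Finset.sum_congr rfl fun i _ => by rw [hbv i]; ring
    rw [hsum]
    rw [div_mul_eq_mul_div, one_mul, div_le_iff₀ hN]
    calc lam ^ 2 * (v ⬝ᵥ v) = lam * (lam * (v ⬝ᵥ v)) := by ring
      _ ≤ lam * ((n:ℝ) * ‖wf‖ ^ 2 / 4) := mul_le_mul_of_nonneg_left hfin hlam.le
      _ = ‖wf‖ ^ 2 * lam / 4 * n := by ring
  -- put everything together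
  rw [hint, Finset.sum_add_distrib]
  calc (1 / (n:ℝ)) * (∑ i, b i ^ 2 + ∑ i, ∑ j, M i j ^ 2 * ∫ ω, (ε ω j) ^ 2 ∂μ)
      ≤ (1 / (n:ℝ)) * (∑ i, b i ^ 2 + σ ^ 2 * ∑ i, ∑ j, M i j ^ 2) := by
        apply mul_le_mul_of_nonneg_left _ (by positivity)
        linarith [hvarbound]
    _ = (1 / (n:ℝ)) * ∑ i, b i ^ 2
          + (σ ^ 2 / n) * ∑ i, ∑ j, M i j ^ 2 := by ring
    _ ≤ ‖wf‖ ^ 2 * lam / 4 + (σ ^ 2 / n) * ∑ i, ∑ j, M i j ^ 2 :=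
        add_le_add_left hbias _
    _ = (σ ^ 2 / n) * ∑ i, (hKherm.eigenvalues i) ^ 2 / (hKherm.eigenvalues i + lam) ^ 2
          + ‖wf‖ ^ 2 * lam / 4 := by rw [hfrob]; ring
end
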